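/- Let Z, Z_1, ..., Z_N be exchangeable real-valued random variables (e.g. i.i.d.). Define π := (#{i : Z_i ≥ Z} + 1)/(N + 1). Then for every α ∈ (0,1), P(π ≤ α) ≤ α. -/

import Mathlib

open MeasureTheory
open Finset ENNReal

noncomputable def cnt6 {N : ℕ} (x : Fin (N + 1) → ℝ) (j : Fin (N + 1)) : ℕ :=
  (Finset.univ.filter fun i => i ≠ j ∧ x j ≤ x i).card

lemma cnt6_zero {N : ℕ} (x : Fin (N + 1) → ℝ) :
    cnt6 x 0 = (Finset.univ.filter fun i : Fin N => x 0 ≤ x i.succ).card := by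
  rw [cnt6, Finset.card_filter, Finset.card_filter, Fin.sum_univ_succ]
  simp [Fin.succ_ne_zero]

lemma cnt6_meas {N : ℕ} (j : Fin (N + 1)) :
    Measurable (fun x : Fin (N + 1) → ℝ => cnt6 x j) := by
  have : (fun x : Fin (N + 1) → ℝ => cnt6 x j)
      = fun x => ∑ i : Fin (N + 1), if i ≠ j ∧ x j ≤ x i then 1 else 0 := by
    funext x; rw [cnt6, Finset.card_filter]
  rw [this]
  refine Finset.measurable_sum _ (fun i _ => ?_)
  refine Measurable.ite ?_ measurable_const measurable_const
  exact (MeasurableSet.const _).inter (measurableSet_le (measurable_pi_apply j) (measurable_pi_apply i))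

lemma cnt6_card_le {N : ℕ} (x : Fin (N + 1) → ℝ) (m : ℕ) :
    (Finset.univ.filter fun j => cnt6 x j < m).card ≤ m := by
  set S := Finset.univ.filter fun j => cnt6 x j < m with hS
  rcases S.eq_empty_or_nonempty with h | h
  · simp [h]
  · obtain ⟨j, hjS, hjmin⟩ := S.exists_min_image x h
    have hsub : S.erase j ⊆ Finset.univ.filter fun i => i ≠ j ∧ x j ≤ x i := by
      intro i hi
      rw [Finset.mem_erase] at hi
      exact Finset.mem_filter.mpr ⟨Finset.mem_univ _, hi.1, hjmin i hi.2⟩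
    have h1 : (S.erase j).card ≤ cnt6 x j := Finset.card_le_card hsub
    have h2 : cnt6 x j < m := (Finset.mem_filter.mp hjS).2
    have hpos : 0 < S.card := Finset.card_pos.mpr h
    have h3 : S.card = (S.erase j).card + 1 := by
      rw [Finset.card_erase_of_mem hjS]
      omega
    calc S.card = (S.erase j).card + 1 := h3
      _ ≤ cnt6 x j + 1 := by omega
      _ ≤ m := h2

lemma cnt6_swap {N : ℕ} (x : Fin (N + 1) → ℝ) (j : Fin (N + 1)) :
    cnt6 (x ∘ Equiv.swap 0 j) 0 = cnt6 x j := by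
  unfold cnt6
  apply Finset.card_bij' (fun i _ => Equiv.swap 0 j i) (fun i _ => Equiv.swap 0 j i)
  · intro i hi
    simp only [Finset.mem_filter, Function.comp_apply] at hi ⊢
    refine ⟨Finset.mem_univ _, ?_, ?_⟩
    · intro h
      apply hi.2.1
      have := (Equiv.swap 0 j).injective (a₁ := i) (a₂ := 0)
      simp only [Equiv.swap_apply_left] at this
      exact this h
    · simpa [Equiv.swap_apply_left] using hi.2.2
  · intro i hi
    simp only [Finset.mem_filter, Function.comp_apply] at hi ⊢
    refine ⟨Finset.mem_univ _, ?_, ?_⟩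
    · intro h
      apply hi.2.1
      have : Equiv.swap 0 j (Equiv.swap 0 j i) = Equiv.swap 0 j 0 := by rw [h]
      simpa [Equiv.swap_apply_self, Equiv.swap_apply_left] using this
    · simpa [Equiv.swap_apply_self, Equiv.swap_apply_left] using hi.2.2
  · intro i _; simp [Equiv.swap_apply_self]
  · intro i _; simp [Equiv.swap_apply_self]


/-- validity of the rank-based p-value for exchangeable
real random variables `(Z, Z_1, ..., Z_N) = (W 0, W 1, ..., W N)`. -/
theorem stmt6 {Ω : Type*} [MeasurableSpace Ω] (P : Measure Ω) [IsProbabilityMeasure P]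
    {N : ℕ} (W : Ω → Fin (N + 1) → ℝ)
    (hmeas : Measurable W)
    (hexch : ∀ σ : Equiv.Perm (Fin (N + 1)),
      Measure.map (fun ω => W ω ∘ σ) P = Measure.map W P)
    (π : Ω → ℝ)
    (hπ : ∀ ω, π ω =
      (((Finset.univ.filter fun i : Fin N => W ω 0 ≤ W ω i.succ).card : ℝ) + 1) / (N + 1)) :
    ∀ α ∈ Set.Ioo (0:ℝ) 1, (P {ω | π ω ≤ α}).toReal ≤ α := by
  intro α hα
  obtain ⟨hα0, hα1⟩ := hα
  set m : ℕ := ⌊α * (N + 1)⌋₊ with hm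
  set Q : Measure (Fin (N + 1) → ℝ) := P.map W with hQ
  haveI : IsProbabilityMeasure Q := Measure.isProbabilityMeasure_map hmeas.aemeasurable
  set A : Fin (N + 1) → Set (Fin (N + 1) → ℝ) := fun j => {x | cnt6 x j < m} with hA
  have hAmeas : ∀ j, MeasurableSet (A j) := fun j =>
    (cnt6_meas j) (measurableSet_Iio (a := m))
  have hNpos : (0:ℝ) < (N : ℝ) + 1 := by positivity
  -- identify the event
  have hset : {ω | π ω ≤ α} = W ⁻¹' (A 0) := by
    ext ω
    simp only [Set.mem_setOf_eq, Set.mem_preimage, hA, hπ ω, cnt6_zero (W ω)]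
    rw [div_le_iff₀ hNpos]
    constructor
    · intro h
      have : ((Finset.univ.filter fun i : Fin N => W ω 0 ≤ W ω i.succ).card + 1 : ℕ) ≤ m := by
        rw [hm]
        apply Nat.le_floor
        push_cast
        linarith
      omega
    · intro h
      have h' : ((Finset.univ.filter fun i : Fin N => W ω 0 ≤ W ω i.succ).card + 1 : ℕ) ≤ m := by
        omega
      have := Nat.floor_le (by positivity : (0:ℝ) ≤ α * (N + 1))
      calc ((Finset.univ.filter fun i : Fin N => W ω 0 ≤ W ω i.succ).card : ℝ) + 1
          = (((Finset.univ.filter fun i : Fin N => W ω 0 ≤ W ω i.succ).card + 1 : ℕ) : ℝ) := by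
            push_cast; ring
        _ ≤ (m : ℝ) := by exact_mod_cast Nat.cast_le.mpr h'
        _ ≤ α * (N + 1) := this
  have hPQ : P {ω | π ω ≤ α} = Q (A 0) := by
    rw [hset, hQ, Measure.map_apply hmeas (hAmeas 0)]
  -- exchangeability: all A j have the same measure
  have hQj : ∀ j, Q (A j) = Q (A 0) := by
    intro j
    set σ : Equiv.Perm (Fin (N + 1)) := Equiv.swap 0 j with hσ
    have hg : Measurable fun x : Fin (N + 1) → ℝ => x ∘ σ := by
      exact measurable_pi_lambda _ fun i => measurable_pi_apply _
    have hpre : A j = (fun x : Fin (N + 1) → ℝ => x ∘ σ) ⁻¹' (A 0) := by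
      ext x
      simp only [hA, Set.mem_setOf_eq, Set.mem_preimage, hσ, cnt6_swap]
    have hmap : Q.map (fun x : Fin (N + 1) → ℝ => x ∘ σ) = Q := by
      rw [hQ, Measure.map_map hg hmeas]
      exact hexch σ
    rw [hpre, ← Measure.map_apply hg (hAmeas 0), hmap]
  -- sum bound
  have hsum : ∑ j : Fin (N + 1), Q (A j) ≤ (m : ℝ≥0∞) := by
    have h1 : ∀ j : Fin (N + 1), Q (A j) = ∫⁻ x, (A j).indicator 1 x ∂Q := by
      intro j
      rw [lintegral_indicator_one (hAmeas j)]
    calc ∑ j : Fin (N + 1), Q (A j)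
        = ∑ j : Fin (N + 1), ∫⁻ x, (A j).indicator 1 x ∂Q := by
          exact Finset.sum_congr rfl fun j _ => h1 j
      _ = ∫⁻ x, ∑ j : Fin (N + 1), (A j).indicator 1 x ∂Q := by
          rw [lintegral_finset_sum]
          exact fun j _ => measurable_one.indicator (hAmeas j)
      _ ≤ ∫⁻ _, (m : ℝ≥0∞) ∂Q := by
          apply lintegral_mono
          intro x
          dsimp only
          have : ∑ j : Fin (N + 1), (A j).indicator 1 x
              = ((Finset.univ.filter fun j : Fin (N + 1) => cnt6 x j < m).card : ℝ≥0∞) := by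
            rw [Finset.card_filter]
            push_cast
            refine Finset.sum_congr rfl fun j _ => ?_
            by_cases hj : cnt6 x j < m
            · simp [Set.indicator_apply, hA, hj]
            · simp [Set.indicator_apply, hA, hj]
          rw [this]
          exact_mod_cast Nat.cast_le.mpr (cnt6_card_le x m)
      _ = (m : ℝ≥0∞) := by simp
  have hfin : ((N : ℝ≥0∞) + 1) * Q (A 0) ≤ (m : ℝ≥0∞) := by
    calc ((N : ℝ≥0∞) + 1) * Q (A 0) = ∑ _j : Fin (N + 1), Q (A 0) := by
          rw [Finset.sum_const, Finset.card_univ, Fintype.card_fin, nsmul_eq_mul]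
          push_cast; ring
      _ = ∑ j : Fin (N + 1), Q (A j) := Finset.sum_congr rfl fun j _ => (hQj j).symm
      _ ≤ (m : ℝ≥0∞) := hsum
  -- convert to reals
  have hQfin : Q (A 0) ≠ ⊤ := measure_ne_top _ _
  have hreal : ((N : ℝ) + 1) * (Q (A 0)).toReal ≤ (m : ℝ) := by
    have := ENNReal.toReal_mono (by simp) hfin
    rw [ENNReal.toReal_mul] at this
    simpa [ENNReal.toReal_add] using this
  rw [hPQ]
  have hm_le : (m : ℝ) ≤ α * (N + 1) := Nat.floor_le (by positivity)
  have : (Q (A 0)).toReal ≤ (m : ℝ) / ((N : ℝ) + 1) := by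
    rw [le_div_iff₀ hNpos]
    linarith [hreal]
  calc (Q (A 0)).toReal ≤ (m : ℝ) / ((N : ℝ) + 1) := this
    _ ≤ α := by rw [div_le_iff₀ hNpos]; linarith [hm_le]
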